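/- Let a^R_i ≥ 0, d_ij > 0 for j ∈ N_i, a^D_ij ≤ 0 for j ∈ N_i, and a^C_i = Σ_{j∈N_i} 2d_ij, a_i = a^R_i + a^C_i − Σ_{j∈N_i} a^D_ij. Then a_i > 0, the weights w_j = 2d_ij/a_i and w'_j = −a^D_ij/a_i and w_0 = a^R_i/a_i are all nonnegative with Σ_{j∈N_i}(w_j + w'_j) + w_0 = 1, and consequently the fixed-point update u_i^{new} = (1/a_i) Σ_{j∈N_i}[2d_ij ū^{s,*}_ij − a^D_ij u_j] is a subconvex combination: if all ū^{s,*}_ij and all u_j lie in [m, M] with 0 ≤ m ≤ M (or if a^R_i = 0 and all lie in [m,M] ⊆ ℝ), then u_i^{new} ∈ [m·(1−w_0), M] (respectively u_i^{new} ∈ [m, M]). -/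

import Mathlib

theorem fixed_point_update_bounds {ι : Type*} [DecidableEq ι] (N : Finset ι) (hN : N.Nonempty)
    (d aD ubars u : ι → ℝ) (aRi m M : ℝ)
    (haRi : 0 ≤ aRi)
    (hd : ∀ j ∈ N, 0 < d j) (haD : ∀ j ∈ N, aD j ≤ 0) :
    let aCi := ∑ j ∈ N, 2 * d j
    let ai := aRi + aCi - ∑ j ∈ N, aD j
    let unew := (1 / ai) * ∑ j ∈ N, (2 * d j * ubars j - aD j * u j)
    0 < ai ∧
    (∀ j ∈ N, 0 ≤ 2 * d j / ai ∧ 0 ≤ -aD j / ai) ∧ 0 ≤ aRi / ai ∧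
    (∑ j ∈ N, (2 * d j / ai + -aD j / ai)) + aRi / ai = 1 ∧
    ((0 ≤ m → m ≤ M →
        (∀ j ∈ N, ubars j ∈ Set.Icc m M ∧ u j ∈ Set.Icc m M) →
        unew ∈ Set.Icc (m * (1 - aRi / ai)) M) ∧
     (aRi = 0 → m ≤ M →
        (∀ j ∈ N, ubars j ∈ Set.Icc m M ∧ u j ∈ Set.Icc m M) →
        unew ∈ Set.Icc m M)) := by
  intro aCi ai unew
  have hS : 0 < aCi := Finset.sum_pos (fun j hj => by linarith [hd j hj]) hN
  have hD : (∑ j ∈ N, aD j) ≤ 0 := Finset.sum_nonpos haD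
  have hai : 0 < ai := by simp only [ai]; linarith
  have hsum : (∑ j ∈ N, (2 * d j - aD j)) = ai - aRi := by
    simp only [ai, aCi, Finset.sum_sub_distrib]; ring
  -- bounds on the sum
  have key : ∀ mm MM : ℝ, (∀ j ∈ N, ubars j ∈ Set.Icc mm MM ∧ u j ∈ Set.Icc mm MM) →
      mm * (ai - aRi) ≤ (∑ j ∈ N, (2 * d j * ubars j - aD j * u j)) ∧
      (∑ j ∈ N, (2 * d j * ubars j - aD j * u j)) ≤ MM * (ai - aRi) := by
    intro mm MM hb
    constructor
    · rw [← hsum, Finset.mul_sum]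
      apply Finset.sum_le_sum
      intro j hj
      obtain ⟨⟨h1, _⟩, ⟨h3, _⟩⟩ := hb j hj
      have hdj := (hd j hj).le
      have haDj := haD j hj
      nlinarith
    · rw [← hsum, Finset.mul_sum]
      apply Finset.sum_le_sum
      intro j hj
      obtain ⟨⟨_, h2⟩, ⟨_, h4⟩⟩ := hb j hj
      have hdj := (hd j hj).le
      have haDj := haD j hj
      nlinarith
  refine ⟨hai, ?_, by positivity, ?_, ?_, ?_⟩
  · intro j hj
    have := (hd j hj).le
    have := haD j hj
    exact ⟨div_nonneg (by linarith) hai.le, div_nonneg (by linarith) hai.le⟩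
  · rw [Finset.sum_congr rfl (fun j _ => by ring : ∀ j ∈ N, 2 * d j / ai + -aD j / ai = (2 * d j - aD j) / ai), ← Finset.sum_div, hsum]
    field_simp
    ring
  · intro hm hmM hb
    obtain ⟨hlo, hhi⟩ := key m M hb
    have hM : 0 ≤ M := le_trans hm hmM
    constructor
    · simp only [unew]
      rw [one_div, inv_mul_eq_div, le_div_iff₀ hai]
      have h : m * (1 - aRi / ai) * ai = m * (ai - aRi) := by field_simp
      rw [h]; exact hlo
    · simp only [unew]
      rw [one_div, inv_mul_eq_div, div_le_iff₀ hai]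
      nlinarith
  · intro h0 hmM hb
    obtain ⟨hlo, hhi⟩ := key m M hb
    rw [h0] at hlo hhi
    simp only [sub_zero] at hlo hhi
    constructor
    · simp only [unew]
      rw [one_div, inv_mul_eq_div, le_div_iff₀ hai]
      linarith
    · simp only [unew]
      rw [one_div, inv_mul_eq_div, div_le_iff₀ hai]
      linarith
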